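/- The function U(s,z) of the previous construction is holomorphic jointly in (s,z) on ℂ × {Re(z) > 0}. -/

import Mathlib

open Complex Metric Filter Topology

noncomputable def Un : ℕ → ℂ → ℂ → ℂ
  | 0, _, z => z
  | (n + 1), s, z => Un n (s - 1) z + Complex.exp ((s - 1) * Un n (s - 1) z)

lemma Un_succ_inner (n : ℕ) (s z : ℂ) :
    Un (n + 1) s z = Un n s (z + Complex.exp ((s - n - 1) * z)) := by
  induction n generalizing s z with
  | zero => simp [Un]
  | succ n ih =>
    have h1 : Un (n + 2) s z
        = Un (n + 1) (s - 1) z + Complex.exp ((s - 1) * Un (n + 1) (s - 1) z) := rfl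
    rw [h1, ih (s - 1) z]
    have h2 : (s - 1 - (n : ℂ) - 1) = (s - ((n : ℕ) + 1 : ℕ) - 1) := by push_cast; ring
    rw [h2]
    rfl

noncomputable def gg (n : ℕ) (s z : ℂ) : ℂ := z + Complex.exp ((s - n - 1) * z)

noncomputable def GG (m : ℕ) : ℕ → ℂ → ℂ → ℂ
  | 0, _, z => z
  | (k + 1), s, z => GG m k s (gg (m + k) s z)

lemma Un_eq_GG (m k : ℕ) (s z : ℂ) : Un (m + k) s z = Un m s (GG m k s z) := by
  induction k generalizing z with
  | zero => rfl
  | succ k ih =>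
    have h0 : m + (k + 1) = (m + k) + 1 := rfl
    rw [h0, Un_succ_inner (m + k) s z]
    have h1 : z + Complex.exp ((s - (m + k : ℕ) - 1) * z) = gg (m + k) s z := by
      simp [gg]
    rw [h1, ih (gg (m + k) s z)]
    rfl

lemma Un_differentiable (n : ℕ) : Differentiable ℂ (fun p : ℂ × ℂ => Un n p.1 p.2) := by
  induction n with
  | zero => exact differentiable_snd
  | succ n ih =>
    have h : (fun p : ℂ × ℂ => Un (n+1) p.1 p.2)
        = fun p : ℂ × ℂ => Un n (p.1 - 1) p.2 + Complex.exp ((p.1 - 1) * Un n (p.1 - 1) p.2) := rfl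
    rw [h]
    have hs : Differentiable ℂ (fun p : ℂ × ℂ => (p.1 - 1, p.2)) :=
      (differentiable_fst.sub_const 1).prodMk differentiable_snd
    have h1 : Differentiable ℂ (fun p : ℂ × ℂ => Un n (p.1 - 1) p.2) := ih.comp hs
    exact h1.add (((differentiable_fst.sub_const 1).mul h1).cexp)

lemma geom_range_le {r : ℝ} (h0 : 0 ≤ r) (h1 : r < 1) (k : ℕ) :
    ∑ j ∈ Finset.range k, r ^ j ≤ (1 - r)⁻¹ := by
  refine le_trans (Summable.sum_le_tsum (Finset.range k) (fun i _ => by positivity)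
    (summable_geometric_of_lt_one h0 h1)) ?_
  exact le_of_eq (tsum_geometric_of_lt_one h0 h1)

set_option maxHeartbeats 1000000 in
lemma un_uniformCauchy (s₀ z₀ : ℂ) (hc : 0 < z₀.re) :
    UniformCauchySeqOn (fun n (p : ℂ × ℂ) => Un n p.1 p.2) atTop
      (closedBall s₀ 1 ×ˢ closedBall z₀ (min (z₀.re / 4) 1)) := by
  set c := z₀.re with hcdef
  set β := c / 2 with hβdef
  set ρ := min (c / 4) 1 with hρdef
  have hβ : 0 < β := by positivity
  have hρ0 : 0 < ρ := lt_min (by positivity) one_pos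
  have hρc : ρ ≤ c / 4 := min_le_left _ _
  have hρ1 : ρ ≤ 1 := min_le_right _ _
  set B := (|s₀.im| + 1) * (‖z₀‖ + 2) with hBdef
  have hB0 : 0 ≤ B := by positivity
  set K := Real.exp (s₀.re * β + B) with hKdef
  have hK0 : 0 < K := Real.exp_pos _
  set r := Real.exp (-β) with hrdef
  have hr0 : 0 < r := Real.exp_pos _
  have hr1 : r < 1 := Real.exp_lt_one_iff.mpr (by linarith)
  set ε : ℕ → ℝ := fun n => K * r ^ n with hεdef
  have hε0 : ∀ n, 0 < ε n := fun n => by positivity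
  -- region facts
  have habs : ∀ (u v : ℂ) (R : ℝ), u ∈ closedBall v R → |(u - v).re| ≤ R ∧ |(u - v).im| ≤ R := by
    intro u v R hu
    rw [mem_closedBall, Complex.dist_eq] at hu
    exact ⟨(Complex.abs_re_le_norm _).trans hu, (Complex.abs_im_le_norm _).trans hu⟩
  have hwre : ∀ w ∈ closedBall z₀ (2 * ρ), β ≤ w.re := by
    intro w hw
    have h := abs_le.mp (habs w z₀ _ hw).1
    simp only [Complex.sub_re] at h
    have := h.1
    simp only [hβdef, hcdef] at *
    linarith [hρc]
  have hwim : ∀ w ∈ closedBall z₀ (2 * ρ), |w.im| ≤ ‖z₀‖ + 2 := by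
    intro w hw
    have h := (habs w z₀ _ hw).2
    simp only [Complex.sub_im] at h
    have h3 : |z₀.im| ≤ ‖z₀‖ := Complex.abs_im_le_norm z₀
    calc |w.im| ≤ |z₀.im| + |w.im - z₀.im| := by
          have := abs_add_le (z₀.im) (w.im - z₀.im); simpa using this
      _ ≤ ‖z₀‖ + 2 := by have : (2:ℝ) * ρ ≤ 2 := by linarith
                         linarith
  have hsre : ∀ s ∈ closedBall s₀ 1, s.re ≤ s₀.re + 1 := by
    intro s hs
    have h := abs_le.mp (habs s s₀ _ hs).1
    simp only [Complex.sub_re] at h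
    linarith [h.2]
  have hsim : ∀ s ∈ closedBall s₀ 1, |s.im| ≤ |s₀.im| + 1 := by
    intro s hs
    have h := (habs s s₀ _ hs).2
    simp only [Complex.sub_im] at h
    calc |s.im| ≤ |s₀.im| + |s.im - s₀.im| := by
          have := abs_add_le (s₀.im) (s.im - s₀.im); simpa using this
      _ ≤ |s₀.im| + 1 := by linarith
  have hsnorm : ∀ s ∈ closedBall s₀ 1, ‖s‖ ≤ ‖s₀‖ + 1 := by
    intro s hs
    rw [mem_closedBall, dist_eq_norm] at hs
    calc ‖s‖ = ‖s₀ + (s - s₀)‖ := by ring_nf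
      _ ≤ ‖s₀‖ + ‖s - s₀‖ := norm_add_le _ _
      _ ≤ ‖s₀‖ + 1 := by linarith
  -- key exponential bound
  have hεexp : ∀ n : ℕ, ε n = Real.exp ((s₀.re - n) * β + B) := by
    intro n
    simp only [hεdef, hKdef, hrdef]
    rw [← Real.exp_nat_mul, ← Real.exp_add]
    congr 1
    push_cast
    ring
  have E1 : ∀ n : ℕ, s₀.re ≤ n → ∀ s ∈ closedBall s₀ 1, ∀ w ∈ closedBall z₀ (2 * ρ),
      ‖Complex.exp ((s - n - 1) * w)‖ ≤ ε n := by
    intro n hn s hs w hw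
    rw [hεexp n, Complex.norm_exp]
    apply Real.exp_le_exp.mpr
    have hre : ((s - n - 1) * w).re = (s.re - n - 1) * w.re - s.im * w.im := by
      simp [Complex.mul_re, Complex.sub_re, Complex.sub_im]
    rw [hre]
    have h1 : s.re - n - 1 ≤ s₀.re - n := by linarith [hsre s hs]
    have h2 : s₀.re - n ≤ 0 := by linarith
    have h3 : β ≤ w.re := hwre w hw
    have h4 : (s.re - n - 1) * w.re ≤ (s₀.re - n) * β := by nlinarith
    have h5 : -(s.im * w.im) ≤ |s.im| * |w.im| := by
      rw [← abs_mul]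
      exact (neg_le_abs _)
    have h6 : |s.im| * |w.im| ≤ B := by
      rw [hBdef]
      have := hsim s hs
      have := hwim w hw
      have : (0:ℝ) ≤ |s.im| := abs_nonneg _
      nlinarith [abs_nonneg s.im, abs_nonneg w.im, hsim s hs, hwim w hw,
        abs_nonneg s₀.im, norm_nonneg z₀]
    linarith
  set χ : ℕ → ℝ := fun n => (‖s₀‖ + n + 2) * ε n with hχdef
  have hχ0 : ∀ n, 0 ≤ χ n := by
    intro n
    have := (hε0 n).le
    have : (0:ℝ) ≤ ‖s₀‖ + n + 2 := by positivity
    positivity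
  have E2 : ∀ n : ℕ, s₀.re ≤ n → ∀ s ∈ closedBall s₀ 1, ∀ w ∈ closedBall z₀ (2 * ρ),
      ‖(s - n - 1) * Complex.exp ((s - n - 1) * w)‖ ≤ χ n := by
    intro n hn s hs w hw
    rw [norm_mul]
    have h1 : ‖s - (n : ℂ) - 1‖ ≤ ‖s₀‖ + n + 2 := by
      calc ‖s - (n:ℂ) - 1‖ ≤ ‖s - (n:ℂ)‖ + ‖(1:ℂ)‖ := norm_sub_le _ _
        _ ≤ ‖s‖ + ‖(n:ℂ)‖ + ‖(1:ℂ)‖ := by linarith [norm_sub_le s (n:ℂ)]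
        _ ≤ ‖s₀‖ + n + 2 := by
            rw [Complex.norm_natCast, norm_one]
            linarith [hsnorm s hs]
    have h2 := E1 n hn s hs w hw
    have h3 : (0:ℝ) ≤ ‖Complex.exp ((s - n - 1) * w)‖ := norm_nonneg _
    have h4 : (0:ℝ) ≤ ‖s₀‖ + (n:ℝ) + 2 := by positivity
    calc ‖s - (n:ℂ) - 1‖ * ‖Complex.exp ((s - n - 1) * w)‖
        ≤ (‖s₀‖ + n + 2) * ε n := mul_le_mul h1 h2 h3 h4
      _ = χ n := rfl
  -- geometric domination of χ
  set q := Real.exp (-(β / 2)) with hqdef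
  have hq0 : 0 < q := Real.exp_pos _
  have hq1 : q < 1 := Real.exp_lt_one_iff.mpr (by linarith)
  set K' := (‖s₀‖ + 2 + 2 / β) * K with hK'def
  have hK'0 : 0 < K' := by
    have : (0:ℝ) < 2 / β := by positivity
    have : (0:ℝ) < ‖s₀‖ + 2 + 2 / β := by positivity
    positivity
  have hrq : r = q * q := by
    rw [hrdef, hqdef, ← Real.exp_add]
    congr 1; ring
  have hnq : ∀ n : ℕ, (n : ℝ) * q ^ n ≤ 2 / β := by
    intro n
    have hqn : q ^ n = Real.exp (-((n : ℝ) * β / 2)) := by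
      rw [hqdef, ← Real.exp_nat_mul]; congr 1; ring
    have h1 : (n : ℝ) * β / 2 ≤ Real.exp ((n : ℝ) * β / 2) := by
      have := Real.add_one_le_exp ((n : ℝ) * β / 2); linarith
    have h2 : (0:ℝ) < Real.exp ((n : ℝ) * β / 2) := Real.exp_pos _
    rw [hqn, Real.exp_neg]
    rw [mul_inv_le_iff₀ h2, div_mul_eq_mul_div, le_div_iff₀ hβ]
    nlinarith
  have hχle : ∀ n, χ n ≤ K' * q ^ n := by
    intro n
    have hqn0 : (0:ℝ) ≤ q ^ n := by positivity
    have hqn1 : q ^ n ≤ 1 := pow_le_one₀ hq0.le hq1.le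
    have h1 : (‖s₀‖ + n + 2) * q ^ n ≤ ‖s₀‖ + 2 + 2 / β := by
      have h2 : (‖s₀‖ + 2) * q ^ n ≤ ‖s₀‖ + 2 := by nlinarith [norm_nonneg s₀]
      have h3 := hnq n
      nlinarith
    have heq : χ n = ((‖s₀‖ + n + 2) * q ^ n) * (K * q ^ n) := by
      simp only [hχdef, hεdef, hrq, mul_pow]; ring
    rw [heq, hK'def]
    have : (0:ℝ) ≤ K * q ^ n := by positivity
    nlinarith [hε0 n]
  -- choice of N₁
  have hN : ∃ N : ℕ, s₀.re ≤ N ∧ K * r ^ N * (1 - r)⁻¹ ≤ ρ / 2 ∧ K' * q ^ N * (1 - q)⁻¹ ≤ 1 := by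
    have t1 : Tendsto (fun N : ℕ => K * r ^ N * (1 - r)⁻¹) atTop (𝓝 0) := by
      have := (tendsto_pow_atTop_nhds_zero_of_lt_one hr0.le hr1).const_mul K
      have := this.mul_const (1 - r)⁻¹
      simpa using this
    have t2 : Tendsto (fun N : ℕ => K' * q ^ N * (1 - q)⁻¹) atTop (𝓝 0) := by
      have := (tendsto_pow_atTop_nhds_zero_of_lt_one hq0.le hq1).const_mul K'
      have := this.mul_const (1 - q)⁻¹
      simpa using this
    have e1 : ∀ᶠ N : ℕ in atTop, K * r ^ N * (1 - r)⁻¹ ≤ ρ / 2 :=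
      t1.eventually (eventually_le_nhds (by positivity))
    have e2 : ∀ᶠ N : ℕ in atTop, K' * q ^ N * (1 - q)⁻¹ ≤ 1 :=
      t2.eventually (eventually_le_nhds one_pos)
    have e3 : ∀ᶠ N : ℕ in atTop, s₀.re ≤ N :=
      tendsto_natCast_atTop_atTop.eventually_ge_atTop s₀.re
    exact ((e3.and e1).and e2).exists.imp (fun N h => ⟨h.1.1, h.1.2, h.2⟩)
  obtain ⟨N₁, hN₁s, hN₁ρ, hN₁q⟩ := hN
  -- partial sums and products
  set Sk : ℕ → ℝ := fun k => ∑ j ∈ Finset.range k, ε (N₁ + j) with hSkdef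
  have hSknn : ∀ k, 0 ≤ Sk k := fun k =>
    Finset.sum_nonneg fun j _ => (hε0 _).le
  have hSksucc : ∀ k, Sk (k + 1) = Sk k + ε (N₁ + k) := fun k =>
    Finset.sum_range_succ _ k
  have hSk : ∀ k, Sk k ≤ ρ / 2 := by
    intro k
    have h1 : Sk k = (K * r ^ N₁) * ∑ j ∈ Finset.range k, r ^ j := by
      rw [hSkdef, Finset.mul_sum]
      refine Finset.sum_congr rfl fun j _ => ?_
      simp only [hεdef, pow_add]; ring
    rw [h1]
    calc (K * r ^ N₁) * ∑ j ∈ Finset.range k, r ^ j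
        ≤ (K * r ^ N₁) * (1 - r)⁻¹ := by
          refine mul_le_mul_of_nonneg_left (geom_range_le hr0.le hr1 k) (by positivity)
      _ ≤ ρ / 2 := hN₁ρ
  set Lk : ℕ → ℝ := fun k => ∏ j ∈ Finset.range k, (1 + χ (N₁ + j)) with hLkdef
  have hLknn : ∀ k, 0 ≤ Lk k := fun k =>
    Finset.prod_nonneg fun j _ => by linarith [hχ0 (N₁ + j)]
  have hLksucc : ∀ k, Lk (k + 1) = Lk k * (1 + χ (N₁ + k)) := fun k =>
    Finset.prod_range_succ _ k
  have hLk : ∀ k, Lk k ≤ 3 := by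
    intro k
    have hsum : ∑ j ∈ Finset.range k, χ (N₁ + j) ≤ 1 := by
      calc ∑ j ∈ Finset.range k, χ (N₁ + j)
          ≤ ∑ j ∈ Finset.range k, K' * q ^ (N₁ + j) :=
            Finset.sum_le_sum fun j _ => hχle (N₁ + j)
        _ = (K' * q ^ N₁) * ∑ j ∈ Finset.range k, q ^ j := by
            rw [Finset.mul_sum]
            refine Finset.sum_congr rfl fun j _ => ?_
            rw [pow_add]; ring
        _ ≤ (K' * q ^ N₁) * (1 - q)⁻¹ :=
            mul_le_mul_of_nonneg_left (geom_range_le hq0.le hq1 k) (by positivity)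
        _ ≤ 1 := hN₁q
    calc Lk k ≤ ∏ j ∈ Finset.range k, Real.exp (χ (N₁ + j)) := by
          refine Finset.prod_le_prod (fun j _ => by linarith [hχ0 (N₁ + j)]) fun j _ => ?_
          have := Real.add_one_le_exp (χ (N₁ + j)); linarith
      _ = Real.exp (∑ j ∈ Finset.range k, χ (N₁ + j)) := (Real.exp_sum _ _).symm
      _ ≤ Real.exp 1 := Real.exp_le_exp.mpr hsum
      _ ≤ 3 := by linarith [Real.exp_one_lt_d9]
  -- basic gg facts
  have hgmove : ∀ n : ℕ, s₀.re ≤ n → ∀ s ∈ closedBall s₀ 1, ∀ z ∈ closedBall z₀ (2 * ρ),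
      ‖gg n s z - z‖ ≤ ε n := by
    intro n hn s hs z hz
    have : gg n s z - z = Complex.exp ((s - n - 1) * z) := by
      simp [gg]
    rw [this]
    exact E1 n hn s hs z hz
  have hglip : ∀ n : ℕ, s₀.re ≤ n → ∀ s ∈ closedBall s₀ 1,
      ∀ z ∈ closedBall z₀ (2 * ρ), ∀ z' ∈ closedBall z₀ (2 * ρ),
      ‖gg n s z - gg n s z'‖ ≤ (1 + χ n) * ‖z - z'‖ := by
    intro n hn s hs z hz z' hz'
    have hd : ∀ w ∈ closedBall z₀ (2 * ρ),
        HasDerivWithinAt (gg n s)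
          (1 + Complex.exp ((s - n - 1) * w) * (s - n - 1)) (closedBall z₀ (2 * ρ)) w := by
      intro w _
      have h1 : HasDerivAt (fun w : ℂ => (s - n - 1) * w) (s - n - 1) w := by
        simpa using (hasDerivAt_id w).const_mul (s - (n:ℂ) - 1)
      have h2 := h1.cexp
      have h3 := (hasDerivAt_id w).add h2
      exact h3.hasDerivWithinAt
    have hbound : ∀ w ∈ closedBall z₀ (2 * ρ),
        ‖1 + Complex.exp ((s - n - 1) * w) * (s - n - 1)‖ ≤ 1 + χ n := by
      intro w hw
      calc ‖1 + Complex.exp ((s - n - 1) * w) * (s - n - 1)‖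
          ≤ ‖(1:ℂ)‖ + ‖Complex.exp ((s - n - 1) * w) * (s - n - 1)‖ := norm_add_le _ _
        _ ≤ 1 + χ n := by
            rw [norm_one]
            have := E2 n hn s hs w hw
            rw [norm_mul] at this ⊢
            linarith [this, mul_comm ‖Complex.exp ((s - n - 1) * w)‖ ‖s - (n:ℂ) - 1‖]
    have := Convex.norm_image_sub_le_of_norm_hasDerivWithin_le hd hbound
      (convex_closedBall z₀ (2 * ρ)) hz' hz
    simpa using this
  have hcast : ∀ k : ℕ, s₀.re ≤ ((N₁ + k : ℕ) : ℝ) := by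
    intro k
    have : (N₁ : ℝ) ≤ ((N₁ + k : ℕ) : ℝ) := by push_cast; linarith [Nat.cast_nonneg (α := ℝ) k]
    linarith
  -- main induction : stability and Lipschitz property
  have main : ∀ k, ∀ s ∈ closedBall s₀ 1,
      (∀ z ∈ closedBall z₀ (2 * ρ - Sk k), ‖GG N₁ k s z - z‖ ≤ Sk k) ∧
      (∀ z ∈ closedBall z₀ (2 * ρ - Sk k), ∀ z' ∈ closedBall z₀ (2 * ρ - Sk k),
        ‖GG N₁ k s z - GG N₁ k s z'‖ ≤ Lk k * ‖z - z'‖) := by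
    intro k
    induction k with
    | zero =>
      intro s hs
      constructor
      · intro z _; simp [GG, hSkdef]
      · intro z _ z' _; simp [GG, hLkdef]
    | succ k ih =>
      intro s hs
      have hsub1 : closedBall z₀ (2 * ρ - Sk (k+1)) ⊆ closedBall z₀ (2 * ρ) :=
        closedBall_subset_closedBall (by linarith [hSknn (k+1)])
      have hmapg : ∀ z ∈ closedBall z₀ (2 * ρ - Sk (k+1)),
          gg (N₁ + k) s z ∈ closedBall z₀ (2 * ρ - Sk k) := by
        intro z hz
        rw [mem_closedBall, dist_eq_norm]
        have h1 : ‖gg (N₁ + k) s z - z‖ ≤ ε (N₁ + k) :=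
          hgmove (N₁ + k) (hcast k) s hs z (hsub1 hz)
        have h2 : ‖z - z₀‖ ≤ 2 * ρ - Sk (k+1) := by
          rw [mem_closedBall, dist_eq_norm] at hz; exact hz
        calc ‖gg (N₁ + k) s z - z₀‖
            ≤ ‖gg (N₁ + k) s z - z‖ + ‖z - z₀‖ := by
              have := norm_add_le (gg (N₁ + k) s z - z) (z - z₀)
              simpa [sub_add_sub_cancel] using this
          _ ≤ ε (N₁ + k) + (2 * ρ - Sk (k+1)) := by linarith
          _ = 2 * ρ - Sk k := by rw [hSksucc k]; ring
      constructor
      · intro z hz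
        have hGGrec : GG N₁ (k + 1) s z = GG N₁ k s (gg (N₁ + k) s z) := rfl
        rw [hGGrec]
        have h1 := (ih s hs).1 (gg (N₁ + k) s z) (hmapg z hz)
        have h2 : ‖gg (N₁ + k) s z - z‖ ≤ ε (N₁ + k) :=
          hgmove (N₁ + k) (hcast k) s hs z (hsub1 hz)
        calc ‖GG N₁ k s (gg (N₁ + k) s z) - z‖
            ≤ ‖GG N₁ k s (gg (N₁ + k) s z) - gg (N₁ + k) s z‖ + ‖gg (N₁ + k) s z - z‖ := by
              have := norm_add_le (GG N₁ k s (gg (N₁ + k) s z) - gg (N₁ + k) s z)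
                (gg (N₁ + k) s z - z)
              simpa [sub_add_sub_cancel] using this
          _ ≤ Sk k + ε (N₁ + k) := by linarith
          _ = Sk (k + 1) := (hSksucc k).symm
      · intro z hz z' hz'
        have hGGrec : ∀ w, GG N₁ (k + 1) s w = GG N₁ k s (gg (N₁ + k) s w) := fun _ => rfl
        rw [hGGrec z, hGGrec z']
        have h1 := (ih s hs).2 (gg (N₁ + k) s z) (hmapg z hz) (gg (N₁ + k) s z') (hmapg z' hz')
        have h2 := hglip (N₁ + k) (hcast k) s hs z (hsub1 hz) z' (hsub1 hz')
        calc ‖GG N₁ k s (gg (N₁ + k) s z) - GG N₁ k s (gg (N₁ + k) s z')‖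
            ≤ Lk k * ‖gg (N₁ + k) s z - gg (N₁ + k) s z'‖ := h1
          _ ≤ Lk k * ((1 + χ (N₁ + k)) * ‖z - z'‖) :=
              mul_le_mul_of_nonneg_left h2 (hLknn k)
          _ = Lk (k + 1) * ‖z - z'‖ := by rw [hLksucc k]; ring
  -- one-step Cauchy estimate on the small ball
  have hρsub : ∀ k, closedBall z₀ ρ ⊆ closedBall z₀ (2 * ρ - Sk k) := by
    intro k
    exact closedBall_subset_closedBall (by linarith [hSk k])
  have hstep : ∀ k, ∀ s ∈ closedBall s₀ 1, ∀ z ∈ closedBall z₀ ρ,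
      ‖GG N₁ (k + 1) s z - GG N₁ k s z‖ ≤ 3 * ε (N₁ + k) := by
    intro k s hs z hz
    have hz1 : z ∈ closedBall z₀ (2 * ρ - Sk (k + 1)) := hρsub (k+1) hz
    have hz2 : z ∈ closedBall z₀ (2 * ρ - Sk k) := hρsub k hz
    have hzfull : z ∈ closedBall z₀ (2 * ρ) :=
      closedBall_subset_closedBall (by linarith [hSknn (k+1)]) hz1
    have hgmem : gg (N₁ + k) s z ∈ closedBall z₀ (2 * ρ - Sk k) := by
      rw [mem_closedBall, dist_eq_norm]
      have h1 : ‖gg (N₁ + k) s z - z‖ ≤ ε (N₁ + k) := hgmove (N₁ + k) (hcast k) s hs z hzfull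
      have h2 : ‖z - z₀‖ ≤ ρ := by rw [mem_closedBall, dist_eq_norm] at hz; exact hz
      calc ‖gg (N₁ + k) s z - z₀‖ ≤ ‖gg (N₁ + k) s z - z‖ + ‖z - z₀‖ := by
            have := norm_add_le (gg (N₁ + k) s z - z) (z - z₀)
            simpa [sub_add_sub_cancel] using this
        _ ≤ ε (N₁ + k) + ρ := by linarith
        _ ≤ 2 * ρ - Sk k := by
            have := hSk (k + 1); rw [hSksucc k] at this; linarith
    have hGGrec : GG N₁ (k + 1) s z = GG N₁ k s (gg (N₁ + k) s z) := rfl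
    rw [hGGrec]
    have h1 := (main k s hs).2 (gg (N₁ + k) s z) hgmem z hz2
    have h2 : ‖gg (N₁ + k) s z - z‖ ≤ ε (N₁ + k) := hgmove (N₁ + k) (hcast k) s hs z hzfull
    calc ‖GG N₁ k s (gg (N₁ + k) s z) - GG N₁ k s z‖
        ≤ Lk k * ‖gg (N₁ + k) s z - z‖ := h1
      _ ≤ 3 * ε (N₁ + k) := by
          have := hLk k
          have := hLknn k
          nlinarith [hε0 (N₁ + k), norm_nonneg (gg (N₁ + k) s z - z)]
  -- telescoping
  have htel : ∀ s ∈ closedBall s₀ 1, ∀ z ∈ closedBall z₀ ρ, ∀ k l, k ≤ l →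
      ‖GG N₁ l s z - GG N₁ k s z‖ ≤ 3 * (K * r ^ (N₁ + k) * (1 - r)⁻¹) := by
    intro s hs z hz k l hkl
    have htel1 : ‖GG N₁ l s z - GG N₁ k s z‖ ≤ ∑ j ∈ Finset.Ico k l, 3 * ε (N₁ + j) := by
      induction l, hkl using Nat.le_induction with
      | base => simp
      | succ l hkl ih =>
        calc ‖GG N₁ (l + 1) s z - GG N₁ k s z‖
            ≤ ‖GG N₁ (l + 1) s z - GG N₁ l s z‖ + ‖GG N₁ l s z - GG N₁ k s z‖ := by
              have := norm_add_le (GG N₁ (l+1) s z - GG N₁ l s z) (GG N₁ l s z - GG N₁ k s z)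
              simpa [sub_add_sub_cancel] using this
          _ ≤ 3 * ε (N₁ + l) + ∑ j ∈ Finset.Ico k l, 3 * ε (N₁ + j) := by
              linarith [hstep l s hs z hz, ih]
          _ = ∑ j ∈ Finset.Ico k (l + 1), 3 * ε (N₁ + j) := by
              rw [Finset.sum_Ico_succ_top hkl]; ring
    refine htel1.trans ?_
    have h2 : ∑ j ∈ Finset.Ico k l, 3 * ε (N₁ + j)
        = 3 * ((K * r ^ (N₁ + k)) * ∑ j ∈ Finset.range (l - k), r ^ j) := by
      rw [Finset.sum_Ico_eq_sum_range, Finset.mul_sum, Finset.mul_sum]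
      refine Finset.sum_congr rfl fun j _ => ?_
      simp only [hεdef, pow_add]
      ring_nf
    rw [h2]
    have h3 := geom_range_le hr0.le hr1 (l - k)
    have h4 : (0:ℝ) ≤ K * r ^ (N₁ + k) := by positivity
    nlinarith [h3, h4]
  -- uniform Cauchy property for GG on the product set
  set T := closedBall s₀ 1 ×ˢ closedBall z₀ ρ with hTdef
  have hGGc : ∀ δ : ℝ, 0 < δ → ∃ N₂ : ℕ, ∀ m ≥ N₂, ∀ n ≥ N₂, ∀ p ∈ T,
      dist (GG N₁ m p.1 p.2) (GG N₁ n p.1 p.2) < δ := by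
    intro δ hδ
    have t1 : Tendsto (fun N : ℕ => 3 * (K * r ^ (N₁ + N) * (1 - r)⁻¹)) atTop (𝓝 0) := by
      have h0 : Tendsto (fun N : ℕ => r ^ N) atTop (𝓝 0) :=
        tendsto_pow_atTop_nhds_zero_of_lt_one hr0.le hr1
      have h1 : Tendsto (fun N : ℕ => 3 * (K * (r ^ N₁ * r ^ N) * (1 - r)⁻¹)) atTop (𝓝 0) := by
        have := ((h0.const_mul (r ^ N₁)).const_mul K).mul_const (1 - r)⁻¹
        have := this.const_mul 3
        simpa [mul_assoc] using this
      refine h1.congr fun N => ?_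
      rw [← pow_add]
    obtain ⟨N₂, hN₂⟩ := (t1.eventually (eventually_lt_nhds hδ)).exists
    refine ⟨N₂, fun m hm n hn p hp => ?_⟩
    obtain ⟨hp1, hp2⟩ := Set.mem_prod.mp hp
    have key : ∀ a b : ℕ, N₂ ≤ a → a ≤ b →
        dist (GG N₁ a p.1 p.2) (GG N₁ b p.1 p.2) < δ := by
      intro a b ha hab
      rw [dist_eq_norm, norm_sub_rev]
      have h1 := htel p.1 hp1 p.2 hp2 a b hab
      have h2 : r ^ (N₁ + a) ≤ r ^ (N₁ + N₂) :=
        pow_le_pow_of_le_one hr0.le hr1.le (Nat.add_le_add_left ha N₁)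
      have h3 : 3 * (K * r ^ (N₁ + a) * (1 - r)⁻¹) ≤ 3 * (K * r ^ (N₁ + N₂) * (1 - r)⁻¹) := by
        have hir : (0:ℝ) < (1 - r)⁻¹ := by
          have : (0:ℝ) < 1 - r := by linarith
          positivity
        have ha1 := mul_le_mul_of_nonneg_left h2 hK0.le
        have ha2 := mul_le_mul_of_nonneg_right ha1 hir.le
        linarith
      calc ‖GG N₁ b p.1 p.2 - GG N₁ a p.1 p.2‖ ≤ 3 * (K * r ^ (N₁ + a) * (1 - r)⁻¹) := h1
        _ ≤ 3 * (K * r ^ (N₁ + N₂) * (1 - r)⁻¹) := h3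
        _ < δ := hN₂
    rcases le_total m n with h | h
    · exact key m n hm h
    · rw [dist_comm]; exact key n m hn h
  -- the compact target region
  set CK := closedBall s₀ 1 ×ˢ closedBall z₀ (2 * ρ) with hCKdef
  have hGGmem : ∀ k, ∀ p ∈ T, (p.1, GG N₁ k p.1 p.2) ∈ CK := by
    intro k p hp
    obtain ⟨hp1, hp2⟩ := Set.mem_prod.mp hp
    refine Set.mem_prod.mpr ⟨hp1, ?_⟩
    rw [mem_closedBall, dist_eq_norm]
    have h1 := (main k p.1 hp1).1 p.2 (hρsub k hp2)
    have h2 : ‖p.2 - z₀‖ ≤ ρ := by rw [mem_closedBall, dist_eq_norm] at hp2; exact hp2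
    calc ‖GG N₁ k p.1 p.2 - z₀‖
        ≤ ‖GG N₁ k p.1 p.2 - p.2‖ + ‖p.2 - z₀‖ := by
          have := norm_add_le (GG N₁ k p.1 p.2 - p.2) (p.2 - z₀)
          simpa [sub_add_sub_cancel] using this
      _ ≤ Sk k + ρ := by linarith
      _ ≤ 2 * ρ := by linarith [hSk k]
  -- uniform continuity of (s, w) ↦ Un N₁ s w on CK
  have hCKcompact : IsCompact CK := (isCompact_closedBall _ _).prod (isCompact_closedBall _ _)
  have hHuc : UniformContinuousOn (fun q : ℂ × ℂ => Un N₁ q.1 q.2) CK :=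
    hCKcompact.uniformContinuousOn_of_continuous (Un_differentiable N₁).continuous.continuousOn
  -- conclusion
  rw [Metric.uniformCauchySeqOn_iff]
  intro δ hδ
  obtain ⟨δ', hδ'0, hδ'⟩ := Metric.uniformContinuousOn_iff.mp hHuc δ hδ
  obtain ⟨N₂, hN₂⟩ := hGGc δ' hδ'0
  refine ⟨N₁ + N₂, fun m hm n hn p hp => ?_⟩
  have hm1 : N₁ ≤ m := le_trans (Nat.le_add_right _ _) hm
  have hn1 : N₁ ≤ n := le_trans (Nat.le_add_right _ _) hn
  have hmeq := Un_eq_GG N₁ (m - N₁) p.1 p.2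
  rw [Nat.add_sub_cancel' hm1] at hmeq
  have hneq := Un_eq_GG N₁ (n - N₁) p.1 p.2
  rw [Nat.add_sub_cancel' hn1] at hneq
  show dist (Un m p.1 p.2) (Un n p.1 p.2) < δ
  rw [hmeq, hneq]
  have hdd : dist (p.1, GG N₁ (m - N₁) p.1 p.2) (p.1, GG N₁ (n - N₁) p.1 p.2)
      = dist (GG N₁ (m - N₁) p.1 p.2) (GG N₁ (n - N₁) p.1 p.2) := by
    simp [Prod.dist_eq, dist_nonneg]
  have hmm : N₂ ≤ m - N₁ := by omega
  have hnn : N₂ ≤ n - N₁ := by omega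
  have := hδ' (p.1, GG N₁ (m - N₁) p.1 p.2) (hGGmem _ p hp)
    (p.1, GG N₁ (n - N₁) p.1 p.2) (hGGmem _ p hp)
    (by rw [hdd]; exact hN₂ _ hmm _ hnn p hp)
  exact this

lemma fderiv_prod_bound (φ : ℂ × ℂ → ℂ) (hφ : Differentiable ℂ φ)
    (s₁ z₁ : ℂ) (R₁ R₂ M : ℝ) (hR₁ : 0 < R₁) (hR₂ : 0 < R₂)
    (hM : ∀ w₁ ∈ closedBall s₁ R₁, ∀ w₂ ∈ closedBall z₁ R₂, ‖φ (w₁, w₂)‖ ≤ M) :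
    ‖fderiv ℂ φ (s₁, z₁)‖ ≤ M / R₁ + M / R₂ := by
  have hM0 : 0 ≤ M :=
    (norm_nonneg _).trans (hM s₁ (mem_closedBall_self hR₁.le) z₁ (mem_closedBall_self hR₂.le))
  set L := fderiv ℂ φ (s₁, z₁) with hLdef
  -- first partial derivative
  have hd1 : HasDerivAt (fun w : ℂ => φ (w, z₁)) (L ((1:ℂ), (0:ℂ))) s₁ := by
    have hι : HasDerivAt (fun w : ℂ => (w, z₁)) ((1:ℂ), (0:ℂ)) s₁ :=
      (hasDerivAt_id s₁).prodMk (hasDerivAt_const s₁ z₁)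
    exact (hφ (s₁, z₁)).hasFDerivAt.comp_hasDerivAt s₁ hι
  have hb1 : ‖L ((1:ℂ), (0:ℂ))‖ ≤ M / R₁ := by
    rw [← hd1.deriv]
    refine Complex.norm_deriv_le_of_forall_mem_sphere_norm_le hR₁
      ((hφ.comp ((differentiable_id).prodMk (differentiable_const z₁))).diffContOnCl) ?_
    intro w hw
    exact hM w (sphere_subset_closedBall hw) z₁ (mem_closedBall_self hR₂.le)
  -- second partial derivative
  have hd2 : HasDerivAt (fun w : ℂ => φ (s₁, w)) (L ((0:ℂ), (1:ℂ))) z₁ := by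
    have hι : HasDerivAt (fun w : ℂ => (s₁, w)) ((0:ℂ), (1:ℂ)) z₁ :=
      (hasDerivAt_const z₁ s₁).prodMk (hasDerivAt_id z₁)
    exact (hφ (s₁, z₁)).hasFDerivAt.comp_hasDerivAt z₁ hι
  have hb2 : ‖L ((0:ℂ), (1:ℂ))‖ ≤ M / R₂ := by
    rw [← hd2.deriv]
    refine Complex.norm_deriv_le_of_forall_mem_sphere_norm_le hR₂
      ((hφ.comp ((differentiable_const s₁).prodMk (differentiable_id))).diffContOnCl) ?_
    intro w hw
    exact hM s₁ (mem_closedBall_self hR₁.le) w (sphere_subset_closedBall hw)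
  refine ContinuousLinearMap.opNorm_le_bound L (by positivity) fun v => ?_
  have hv : v = v.1 • ((1:ℂ), (0:ℂ)) + v.2 • ((0:ℂ), (1:ℂ)) := by
    apply Prod.ext <;> simp
  calc ‖L v‖ = ‖v.1 • L ((1:ℂ), (0:ℂ)) + v.2 • L ((0:ℂ), (1:ℂ))‖ := by
        conv_lhs => rw [hv]
        rw [map_add, map_smul, map_smul]
    _ ≤ ‖v.1‖ * ‖L ((1:ℂ), (0:ℂ))‖ + ‖v.2‖ * ‖L ((0:ℂ), (1:ℂ))‖ := by
        refine (norm_add_le _ _).trans ?_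
        rw [norm_smul, norm_smul]
    _ ≤ ‖v‖ * (M / R₁) + ‖v‖ * (M / R₂) := by
        have h1 : ‖v.1‖ ≤ ‖v‖ := norm_fst_le v
        have h2 : ‖v.2‖ ≤ ‖v‖ := norm_snd_le v
        have hMR1 : (0:ℝ) ≤ M / R₁ := by positivity
        have hMR2 : (0:ℝ) ≤ M / R₂ := by positivity
        have := mul_le_mul h1 hb1 (norm_nonneg _) (norm_nonneg _)
        have := mul_le_mul h2 hb2 (norm_nonneg _) (norm_nonneg _)
        nlinarith [norm_nonneg v.1, norm_nonneg v.2, norm_nonneg (L ((1:ℂ),(0:ℂ))),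
          norm_nonneg (L ((0:ℂ),(1:ℂ)))]
    _ = (M / R₁ + M / R₂) * ‖v‖ := by ring

theorem stmt_8 (U : ℂ → ℂ → ℂ)
    (hU : ∀ (s z : ℂ), 0 < z.re → Tendsto (fun n => Un n s z) atTop (nhds (U s z))) :
    DifferentiableOn ℂ (fun p : ℂ × ℂ => U p.1 p.2) {p : ℂ × ℂ | 0 < p.2.re} := by
  intro p₀ hp₀
  obtain ⟨s₀, z₀⟩ := p₀
  have hc : 0 < z₀.re := hp₀
  set c := z₀.re with hcdef
  set ρ := min (c / 4) 1 with hρdef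
  have hρ0 : 0 < ρ := lt_min (by positivity) one_pos
  have hρc : ρ ≤ c / 4 := min_le_left _ _
  have hρ1 : ρ ≤ 1 := min_le_right _ _
  have huc := un_uniformCauchy s₀ z₀ hc
  rw [Metric.uniformCauchySeqOn_iff] at huc
  set V : Set (ℂ × ℂ) := ball s₀ (1/2) ×ˢ ball z₀ (ρ/2) with hVdef
  have hVopen : IsOpen V := isOpen_ball.prod isOpen_ball
  have hp₀V : (s₀, z₀) ∈ V :=
    Set.mem_prod.mpr ⟨mem_ball_self (by norm_num), mem_ball_self (by positivity)⟩
  have hVpos : ∀ p ∈ V, 0 < (p.2 : ℂ).re := by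
    intro p hp
    obtain ⟨_, hp2⟩ := Set.mem_prod.mp hp
    rw [mem_ball, Complex.dist_eq] at hp2
    have h1 : |(p.2 - z₀).re| ≤ ‖p.2 - z₀‖ := Complex.abs_re_le_norm _
    have := abs_le.mp (h1.trans hp2.le)
    simp only [Complex.sub_re] at this
    have := this.1
    have : c - ρ / 2 ≤ p.2.re := by linarith
    linarith [hρc]
  -- uniform Cauchy sequence of derivatives on V
  set F' : ℕ → ℂ × ℂ → (ℂ × ℂ →L[ℂ] ℂ) :=
    fun n p => fderiv ℂ (fun q : ℂ × ℂ => Un n q.1 q.2) p with hF'def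
  have hF'c : UniformCauchySeqOn F' atTop V := by
    rw [Metric.uniformCauchySeqOn_iff]
    intro δ hδ
    set η := δ / (2 * (4 + 4 / ρ)) with hηdef
    have h4ρ : (0:ℝ) < 4 + 4 / ρ := by positivity
    have hη0 : 0 < η := by positivity
    obtain ⟨N, hN⟩ := huc η hη0
    refine ⟨N, fun m hm n hn p hp => ?_⟩
    obtain ⟨hp1, hp2⟩ := Set.mem_prod.mp hp
    set φ : ℂ × ℂ → ℂ := fun q => Un m q.1 q.2 - Un n q.1 q.2 with hφdef
    have hφd : Differentiable ℂ φ := (Un_differentiable m).sub (Un_differentiable n)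
    have hφM : ∀ w₁ ∈ closedBall p.1 (1/4), ∀ w₂ ∈ closedBall p.2 (ρ/4),
        ‖φ (w₁, w₂)‖ ≤ η := by
      intro w₁ hw₁ w₂ hw₂
      have hw₁' : w₁ ∈ closedBall s₀ 1 := by
        rw [mem_closedBall] at *
        rw [mem_ball] at hp1
        calc dist w₁ s₀ ≤ dist w₁ p.1 + dist p.1 s₀ := dist_triangle _ _ _
          _ ≤ 1 := by linarith
      have hw₂' : w₂ ∈ closedBall z₀ (min (z₀.re/4) 1) := by
        rw [mem_closedBall] at *
        rw [mem_ball] at hp2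
        calc dist w₂ z₀ ≤ dist w₂ p.2 + dist p.2 z₀ := dist_triangle _ _ _
          _ ≤ min (z₀.re/4) 1 := by
              have : min (z₀.re/4) 1 = ρ := rfl
              rw [this]; linarith
      have := hN m hm n hn (w₁, w₂) (Set.mem_prod.mpr ⟨hw₁', hw₂'⟩)
      rw [dist_eq_norm] at this
      exact this.le
    have hfd : fderiv ℂ φ p = F' m p - F' n p := by
      rw [hφdef, hF'def]
      exact fderiv_sub ((Un_differentiable m) p) ((Un_differentiable n) p)
    have hbound : ‖fderiv ℂ φ p‖ ≤ η / (1/4) + η / (ρ/4) := by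
      have := fderiv_prod_bound φ hφd p.1 p.2 (1/4) (ρ/4) η (by norm_num) (by positivity) hφM
      simpa using this
    rw [dist_eq_norm, ← hfd]
    have hcalc : η / (1/4) + η / (ρ/4) = η * (4 + 4 / ρ) := by
      field_simp
    have : η * (4 + 4 / ρ) = δ / 2 := by
      rw [hηdef]
      field_simp
    calc ‖fderiv ℂ φ p‖ ≤ η / (1/4) + η / (ρ/4) := hbound
      _ = δ / 2 := by rw [hcalc, this]
      _ < δ := by linarith
  -- limit of the derivatives
  set g' : ℂ × ℂ → (ℂ × ℂ →L[ℂ] ℂ) := fun p => limUnder atTop (fun n => F' n p) with hg'def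
  have hg' : ∀ p ∈ V, Tendsto (fun n => F' n p) atTop (𝓝 (g' p)) := by
    intro p hp
    exact (hF'c.cauchySeq hp).tendsto_limUnder
  have hkey : HasFDerivAt (fun p : ℂ × ℂ => U p.1 p.2) (g' (s₀, z₀)) (s₀, z₀) :=
    hasFDerivAt_of_tendstoUniformlyOn hVopen
      (hF'c.tendstoUniformlyOn_of_tendsto hg')
      (fun n p hp => ((Un_differentiable n) p).hasFDerivAt)
      (fun p hp => hU p.1 p.2 (hVpos p hp)) hp₀V
  exact hkey.differentiableAt.differentiableWithinAt
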